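/- Let (Q,+) be a group, h, k permutations of Q, and define x·y = h(x) + k(y). If (Q,·) is a right F-quasigroup, then h(x + y) = h(x) - h(0) + h(y) for all x,y ∈ Q; consequently x ↦ h(x) - h(0) and x ↦ -h(0) + h(x) are automorphisms of (Q,+). -/

import Mathlib

/-- If x·y = h(x) + k(y) defines a right F-quasigroup over a group (Q,+),
then h(x+y) = h(x) - h(0) + h(y), and x ↦ h(x) - h(0) and x ↦ -h(0) + h(x)
are automorphisms of (Q,+). -/
theorem stmt10 {Q : Type*} [AddGroup Q] (h k : Q → Q)
    (hh : Function.Bijective h) (hk : Function.Bijective k)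
    (mul : Q → Q → Q) (hmul : ∀ x y, mul x y = h x + k y)
    (β : Q → Q) (hβ : ∀ x, mul (β x) x = x)
    (hFr : ∀ x y z, mul (mul z y) x = mul (mul z (β x)) (mul y x)) :
    (∀ x y, h (x + y) = h x - h 0 + h y) ∧
    (∃ φ : AddAut Q, ∀ x, φ x = h x - h 0) ∧
    (∃ ψ : AddAut Q, ∀ x, ψ x = -h 0 + h x) := by
  have key : ∀ x y z, h (h z + k y) + k x = h (h z + k (β x)) + k (h y + k x) := by
    intro x y z
    have := hFr x y z
    simpa only [hmul] using this
  obtain ⟨z0, hz0⟩ := hh.2 0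
  set c := k (β 0) with hc
  have e1 : ∀ y, k (h y + k 0) = -h c + (h (k y) + k 0) := by
    intro y
    have h1 : h (k y) + k 0 = h c + k (h y + k 0) := by
      have := key 0 y z0
      rwa [hz0, zero_add, zero_add] at this
    rw [h1, neg_add_cancel_left]
  have e2 : ∀ y z, h (h z + k y) = h (h z + c) - h c + h (k y) := by
    intro y z
    have h2 := key 0 y z
    rw [e1 y] at h2
    have h3 : h (h z + k y) + k 0 = (h (h z + c) - h c + h (k y)) + k 0 := by
      rw [h2]; simp [sub_eq_add_neg, add_assoc, hc]
    exact add_right_cancel h3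
  have main : ∀ a b, h (a + b) = h (a + c) - h c + h b := by
    intro a b
    obtain ⟨z, hz⟩ := hh.2 a
    obtain ⟨y, hy⟩ := hk.2 b
    rw [← hz, ← hy]; exact e2 y z
  have hc' : ∀ a, h (a + c) = h a - h 0 + h c := by
    intro a
    have := main a 0
    rw [add_zero] at this
    rw [this]; simp [sub_eq_add_neg, add_assoc]
  have hmain : ∀ x y, h (x + y) = h x - h 0 + h y := by
    intro x y
    rw [main x y, hc']
    simp [sub_eq_add_neg, add_assoc]
  refine ⟨hmain, ?_, ?_⟩
  · set H := Equiv.ofBijective h hh with hH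
    refine ⟨{ toFun := fun x => h x - h 0,
              invFun := fun y => H.symm (y + h 0),
              left_inv := ?_, right_inv := ?_, map_add' := ?_ }, fun x => rfl⟩
    · intro x
      show H.symm (h x - h 0 + h 0) = x
      rw [sub_add_cancel]
      exact H.symm_apply_apply x
    · intro y
      show h (H.symm (y + h 0)) - h 0 = y
      rw [show h (H.symm (y + h 0)) = H (H.symm (y + h 0)) from rfl, H.apply_symm_apply]
      simp
    · intro x y
      show h (x + y) - h 0 = (h x - h 0) + (h y - h 0)
      rw [hmain]
      simp [sub_eq_add_neg, add_assoc]
  · set H := Equiv.ofBijective h hh with hH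
    refine ⟨{ toFun := fun x => -h 0 + h x,
              invFun := fun y => H.symm (h 0 + y),
              left_inv := ?_, right_inv := ?_, map_add' := ?_ }, fun x => rfl⟩
    · intro x
      show H.symm (h 0 + (-h 0 + h x)) = x
      rw [add_neg_cancel_left]
      exact H.symm_apply_apply x
    · intro y
      show -h 0 + h (H.symm (h 0 + y)) = y
      rw [show h (H.symm (h 0 + y)) = H (H.symm (h 0 + y)) from rfl, H.apply_symm_apply]
      simp
    · intro x y
      show -h 0 + h (x + y) = (-h 0 + h x) + (-h 0 + h y)
      rw [hmain]
      simp [sub_eq_add_neg, add_assoc]
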